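/- Let n ≥ 2, let S ⊆ ℝ^n be a compact set with 0 ∉ S such that σ_S is a finite measure, and let θ : ℝ^n → ℝ be continuous. Then for every t ∈ ℝ^n, the map ε ↦ ∫ G_n(ε·t − y)·θ(y) dσ_S(y) is real analytic on the open interval {ε ∈ ℝ : |ε|·‖t‖ < dist(0, S)}. -/

import Mathlib

open MeasureTheory RealInnerProductSpace Pointwise

/-- The measure `σ_S`: the `(n-1)`-dimensional Hausdorff measure on `ℝⁿ` restricted to `S`. -/
noncomputable def bdryMeasure (n : ℕ) (S : Set (EuclideanSpace ℝ (Fin n))) :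
    Measure (EuclideanSpace ℝ (Fin n)) := (μH[(n : ℝ) - 1]).restrict S

/-- `s_n`: the `(n-1)`-dimensional Hausdorff measure of the unit sphere of `ℝⁿ`. -/
noncomputable def sphereArea (n : ℕ) : ℝ :=
  (μH[(n : ℝ) - 1] (Metric.sphere (0 : EuclideanSpace ℝ (Fin n)) 1)).toReal

/-- The fundamental solution `G_n` of `-Δ` in `ℝⁿ`. -/
noncomputable def fundSol (n : ℕ) (x : EuclideanSpace ℝ (Fin n)) : ℝ :=
  if n = 2 then -(1 / (2 * Real.pi)) * Real.log ‖x‖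
  else (1 / (((n : ℝ) - 2) * sphereArea n)) * ‖x‖ ^ ((2 : ℝ) - (n : ℝ))

/-- The partial derivative in the `i`-th coordinate direction. -/
noncomputable def pderiv' {n : ℕ} (i : Fin n) (F : EuclideanSpace ℝ (Fin n) → ℝ) :
    EuclideanSpace ℝ (Fin n) → ℝ :=
  fun x => lineDeriv ℝ F x (EuclideanSpace.single i 1)

/-- The iterated partial derivative `D^β F` of multi-index `β`. -/
noncomputable def multiDeriv {n : ℕ} (β : Fin n → ℕ) (F : EuclideanSpace ℝ (Fin n) → ℝ) :
    EuclideanSpace ℝ (Fin n) → ℝ :=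
  (List.finRange n).foldr (fun i G => (pderiv' i)^[β i] G) F

/- ### Auxiliary material for `stmt8` -/

open Metric Complex

/-- The complex quadratic polynomial extending `z ↦ ‖z • t - y‖²`. -/
noncomputable def Qc {n : ℕ} (t : EuclideanSpace ℝ (Fin n)) (z : ℂ)
    (y : EuclideanSpace ℝ (Fin n)) : ℂ :=
  ((‖t‖^2 : ℝ) : ℂ) * z^2 - 2 * ((⟪t, y⟫ : ℝ) : ℂ) * z + ((‖y‖^2 : ℝ) : ℂ)

lemma Qc_cont {n : ℕ} (t : EuclideanSpace ℝ (Fin n)) :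
    Continuous (fun p : ℂ × EuclideanSpace ℝ (Fin n) => Qc t p.1 p.2) := by
  unfold Qc
  apply Continuous.add
  apply Continuous.sub
  · exact continuous_const.mul (continuous_fst.pow 2)
  · exact (continuous_const.mul ((Complex.continuous_ofReal.comp
      ((continuous_const.inner continuous_snd))))).mul continuous_fst
  · exact Complex.continuous_ofReal.comp ((continuous_snd.norm).pow 2)

lemma expand_sq {n : ℕ} (t y : EuclideanSpace ℝ (Fin n)) (x : ℝ) :
    ‖x • t - y‖^2 = ‖t‖^2 * x^2 - 2 * ⟪t, y⟫ * x + ‖y‖^2 := by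
  rw [norm_sub_sq_real, norm_smul, real_inner_smul_left]
  simp [mul_pow]
  ring

lemma Qc_re {n : ℕ} (t y : EuclideanSpace ℝ (Fin n)) (z : ℂ) :
    (Qc t z y).re = ‖z.re • t - y‖^2 - ‖t‖^2 * z.im^2 := by
  rw [expand_sq]
  simp [Qc, Complex.mul_re, Complex.sub_re, Complex.add_re, pow_two]
  ring

lemma Qc_ofReal {n : ℕ} (t y : EuclideanSpace ℝ (Fin n)) (x : ℝ) :
    Qc t (x : ℂ) y = ((‖x • t - y‖^2 : ℝ) : ℂ) := by
  rw [expand_sq]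
  simp [Qc]
  try push_cast
  try ring_nf

lemma Qc_hasDerivAt {n : ℕ} (t y : EuclideanSpace ℝ (Fin n)) (z : ℂ) :
    HasDerivAt (fun w => Qc t w y)
      (2 * ((‖t‖^2 : ℝ) : ℂ) * z - 2 * ((⟪t, y⟫ : ℝ) : ℂ)) z := by
  have h1 : HasDerivAt (fun w : ℂ => ((‖t‖^2 : ℝ) : ℂ) * w^2)
      (((‖t‖^2 : ℝ) : ℂ) * (2 * z)) z := by
    simpa [-Complex.ofReal_pow] using ((hasDerivAt_pow 2 z).const_mul (((‖t‖^2 : ℝ) : ℂ)))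
  have h2 : HasDerivAt (fun w : ℂ => 2 * ((⟪t, y⟫ : ℝ) : ℂ) * w)
      (2 * ((⟪t, y⟫ : ℝ) : ℂ)) z := by
    simpa using (hasDerivAt_id z).const_mul (2 * ((⟪t, y⟫ : ℝ) : ℂ))
  have := (h1.sub h2).add_const (((‖y‖^2 : ℝ) : ℂ))
  exact this.congr_deriv (by ring)

/-- Key positivity estimate: for `z` in a suitable complex ball around `ε₀` and `y ∈ S`,
the real part of `Qc t z y` is positive. -/
lemma pos_est {n : ℕ} (t y : EuclideanSpace ℝ (Fin n)) (S : Set (EuclideanSpace ℝ (Fin n)))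
    (hy : y ∈ S) (ε₀ : ℝ) (hε₀ : |ε₀| * ‖t‖ < infDist 0 S) (z : ℂ)
    (hz : z ∈ closedBall (ε₀ : ℂ) ((infDist 0 S - |ε₀| * ‖t‖) / (3 * (‖t‖ + 1)))) :
    0 < ‖z.re • t - y‖^2 - ‖t‖^2 * z.im^2 := by
  set d := infDist 0 S
  set a := ‖t‖
  set δ := d - |ε₀| * a with hδdef
  have hδ : 0 < δ := by simp [hδdef]; linarith
  set r := δ / (3 * (a + 1)) with hrdef
  have ha : 0 ≤ a := norm_nonneg t
  have hra : r * a ≤ δ / 3 := by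
    rw [hrdef, div_mul_eq_mul_div, div_le_div_iff₀ (by positivity) (by norm_num)]
    nlinarith
  have hr2 : r ≤ δ / 3 := by
    rw [hrdef, div_le_div_iff₀ (by positivity) (by norm_num)]
    nlinarith
  have hd : d ≤ ‖y‖ := by
    have := infDist_le_dist_of_mem (x := (0 : EuclideanSpace ℝ (Fin n))) hy
    rwa [dist_zero_left] at this
  have hzd : ‖z - (ε₀ : ℂ)‖ ≤ r := by
    rw [← Complex.dist_eq]; exact mem_closedBall.mp hz
  have hre : |z.re - ε₀| ≤ r := by
    have := Complex.abs_re_le_norm (z - (ε₀ : ℂ))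
    simpa using this.trans hzd
  have him : |z.im| ≤ r := by
    have := Complex.abs_im_le_norm (z - (ε₀ : ℂ))
    simpa using this.trans hzd
  have hxa : |z.re| * a ≤ |ε₀| * a + δ / 3 := by
    have h1 : |z.re| ≤ |ε₀| + r := by
      have := abs_abs_sub_abs_le_abs_sub z.re ε₀
      have h2 := (abs_sub_abs_le_abs_sub z.re ε₀).trans hre
      linarith [abs_nonneg (z.re - ε₀)]
    nlinarith
  have hlow : ‖y‖ - |z.re| * a ≤ ‖z.re • t - y‖ := by
    have h1 : ‖y‖ - ‖z.re • t‖ ≤ ‖y - z.re • t‖ := norm_sub_norm_le _ _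
    rw [norm_sub_rev] at h1
    rwa [norm_smul, Real.norm_eq_abs] at h1
  have hlow2 : 2 * δ / 3 ≤ ‖z.re • t - y‖ := by
    have : d - |ε₀| * a - δ / 3 ≤ ‖y‖ - |z.re| * a := by linarith
    have h2 : d - |ε₀| * a - δ / 3 = 2 * δ / 3 := by rw [hδdef]; ring
    linarith
  have himsq : a^2 * z.im^2 ≤ (δ/3)^2 := by
    have h1 : a * |z.im| ≤ δ / 3 := by nlinarith [abs_nonneg z.im]
    have h2 := mul_self_le_mul_self (mul_nonneg ha (abs_nonneg z.im)) h1
    nlinarith [_root_.sq_abs z.im]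
  nlinarith [norm_nonneg (z.re • t - y), _root_.sq_abs z.im]

/-- Key analyticity lemma: holomorphy of the parameter integral
`z ↦ ∫ Φ(Qc t z y) θ(y) dμ(y)` near a point where `Re (Qc t z y) > 0` uniformly. -/
lemma key_analytic {n : ℕ} (μ : Measure (EuclideanSpace ℝ (Fin n))) [IsFiniteMeasure μ]
    (S : Set (EuclideanSpace ℝ (Fin n))) (hS : IsCompact S) (hres : μ.restrict S = μ)
    (θ : EuclideanSpace ℝ (Fin n) → ℝ) (hθ : Continuous θ)
    (t : EuclideanSpace ℝ (Fin n))
    (Φ : ℂ → ℂ) (hΦ : ∀ w : ℂ, 0 < w.re → DifferentiableAt ℂ Φ w)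
    (z₀ : ℂ) (ρ : ℝ) (hρ : 0 < ρ)
    (hpos : ∀ z ∈ closedBall z₀ ρ, ∀ y ∈ S, 0 < (Qc t z y).re) :
    AnalyticAt ℂ (fun z => ∫ y, Φ (Qc t z y) * ((θ y : ℝ) : ℂ) ∂μ) z₀ := by
  -- the open right half-plane
  set U : Set ℂ := {w : ℂ | 0 < w.re} with hUdef
  have hUopen : IsOpen U := isOpen_lt continuous_const Complex.continuous_re
  have hΦan : AnalyticOnNhd ℂ Φ U :=
    DifferentiableOn.analyticOnNhd (fun w hw => (hΦ w hw).differentiableWithinAt) hUopen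
  have hΦc : ContinuousOn Φ U := fun w hw => ((hΦ w hw).continuousAt).continuousWithinAt
  have hΦ'c : ContinuousOn (deriv Φ) U :=
    fun w hw => ((hΦan.deriv w hw).continuousAt).continuousWithinAt
  -- compact set of values of Qc
  have hKc : IsCompact ((fun p : ℂ × EuclideanSpace ℝ (Fin n) => Qc t p.1 p.2) ''
      (closedBall z₀ ρ ×ˢ S)) := ((isCompact_closedBall z₀ ρ).prod hS).image (Qc_cont t)
  set K := (fun p : ℂ × EuclideanSpace ℝ (Fin n) => Qc t p.1 p.2) '' (closedBall z₀ ρ ×ˢ S)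
    with hKdef
  have hKU : K ⊆ U := by
    rintro w ⟨⟨z, y⟩, ⟨hz, hy⟩, rfl⟩
    exact hpos z hz y hy
  obtain ⟨B₁, hB₁⟩ := hKc.exists_bound_of_continuousOn (hΦc.mono hKU)
  obtain ⟨B₂, hB₂⟩ := hKc.exists_bound_of_continuousOn (hΦ'c.mono hKU)
  -- bound on the z-derivative of Qc
  obtain ⟨B₃, hB₃⟩ := ((isCompact_closedBall z₀ ρ).prod hS).exists_bound_of_continuousOn
    (f := fun p : ℂ × EuclideanSpace ℝ (Fin n) =>
      2 * ((‖t‖^2 : ℝ) : ℂ) * p.1 - 2 * ((⟪t, p.2⟫ : ℝ) : ℂ))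
    (by
      apply Continuous.continuousOn
      exact ((continuous_const.mul continuous_fst)).sub
        (continuous_const.mul (Complex.continuous_ofReal.comp
          (continuous_const.inner continuous_snd))))
  -- bound on θ
  obtain ⟨Θ, hΘ⟩ := hS.exists_bound_of_continuousOn hθ.continuousOn
  -- a.e. membership in S
  have haeS : ∀ᵐ y ∂μ, y ∈ S := by
    rw [← hres]; exact ae_restrict_mem hS.measurableSet
  -- measurability of the integrand for z in the closed ball
  have hmeas : ∀ z ∈ closedBall z₀ ρ,
      AEStronglyMeasurable (fun y => Φ (Qc t z y) * ((θ y : ℝ) : ℂ)) μ := by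
    intro z hz
    rw [← hres]
    apply ContinuousOn.aestronglyMeasurable _ hS.measurableSet
    apply ContinuousOn.mul
    · apply hΦc.comp
      · exact ((Qc_cont t).comp (Continuous.prodMk_right z)).continuousOn
      · intro y hy; exact hpos z hz y hy
    · exact (Complex.continuous_ofReal.comp hθ).continuousOn
  have hmeas' : ∀ z ∈ closedBall z₀ ρ,
      AEStronglyMeasurable (fun y => deriv Φ (Qc t z y) *
        (2 * ((‖t‖^2 : ℝ) : ℂ) * z - 2 * ((⟪t, y⟫ : ℝ) : ℂ)) * ((θ y : ℝ) : ℂ)) μ := by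
    intro z hz
    rw [← hres]
    apply ContinuousOn.aestronglyMeasurable _ hS.measurableSet
    apply ContinuousOn.mul
    apply ContinuousOn.mul
    · apply hΦ'c.comp
      · exact ((Qc_cont t).comp (Continuous.prodMk_right z)).continuousOn
      · intro y hy; exact hpos z hz y hy
    · exact (continuous_const.sub (continuous_const.mul
        (Complex.continuous_ofReal.comp (continuous_const.inner continuous_id)))).continuousOn
    · exact (Complex.continuous_ofReal.comp hθ).continuousOn
  -- differentiability on the open ball
  have hdiff : DifferentiableOn ℂ (fun z => ∫ y, Φ (Qc t z y) * ((θ y : ℝ) : ℂ) ∂μ)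
      (ball z₀ ρ) := by
    intro z₁ hz₁
    have hz₁' : z₁ ∈ closedBall z₀ ρ := ball_subset_closedBall hz₁
    set ε' := ρ - dist z₁ z₀ with hε'def
    have hε' : 0 < ε' := by simp only [hε'def, sub_pos]; exact mem_ball.mp hz₁
    have hball : ball z₁ ε' ⊆ closedBall z₀ ρ := by
      intro w hw
      have := dist_triangle w z₁ z₀
      have hw' := mem_ball.mp hw
      exact mem_closedBall.mpr (by linarith)
    have hmem : ∀ z ∈ ball z₁ ε', z ∈ closedBall z₀ ρ := fun z hz => hball hz
    have := hasDerivAt_integral_of_dominated_loc_of_deriv_le (μ := μ) (x₀ := z₁) (Metric.ball_mem_nhds z₁ hε')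
      (F := fun z y => Φ (Qc t z y) * ((θ y : ℝ) : ℂ))
      (F' := fun z y => deriv Φ (Qc t z y) *
        (2 * ((‖t‖^2 : ℝ) : ℂ) * z - 2 * ((⟪t, y⟫ : ℝ) : ℂ)) * ((θ y : ℝ) : ℂ))
      (bound := fun _ => B₂ * B₃ * Θ)
      ?_ ?_ ?_ ?_ ?_ ?_
    · exact (this.2.differentiableAt).differentiableWithinAt
    · exact Filter.eventually_of_mem (isOpen_ball.mem_nhds hz₁)
        (fun z hz => hmeas z (ball_subset_closedBall hz))
    · apply Integrable.mono' (integrable_const (B₁ * Θ)) (hmeas z₁ hz₁')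
      filter_upwards [haeS] with y hy
      rw [norm_mul]
      have h1 : ‖Φ (Qc t z₁ y)‖ ≤ B₁ := hB₁ _ ⟨(z₁, y), ⟨hz₁', hy⟩, rfl⟩
      have h2 : ‖((θ y : ℝ) : ℂ)‖ ≤ Θ := by rw [Complex.norm_real]; exact hΘ y hy
      exact mul_le_mul h1 h2 (norm_nonneg _) ((norm_nonneg _).trans h1)
    · exact hmeas' z₁ hz₁'
    · filter_upwards [haeS] with y hy
      intro z hz
      have hz' := hmem z hz
      rw [norm_mul, norm_mul]
      have h1 : ‖deriv Φ (Qc t z y)‖ ≤ B₂ := hB₂ _ ⟨(z, y), ⟨hz', hy⟩, rfl⟩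
      have h2 : ‖2 * ((‖t‖^2 : ℝ) : ℂ) * z - 2 * ((⟪t, y⟫ : ℝ) : ℂ)‖ ≤ B₃ :=
        hB₃ (z, y) ⟨hz', hy⟩
      have h3 : ‖((θ y : ℝ) : ℂ)‖ ≤ Θ := by rw [Complex.norm_real]; exact hΘ y hy
      have h12 : ‖deriv Φ (Qc t z y)‖ * ‖2 * ((‖t‖^2 : ℝ) : ℂ) * z - 2 * ((⟪t, y⟫ : ℝ) : ℂ)‖
          ≤ B₂ * B₃ := mul_le_mul h1 h2 (norm_nonneg _) ((norm_nonneg _).trans h1)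
      exact mul_le_mul h12 h3 (norm_nonneg _)
        ((mul_nonneg (norm_nonneg _) (norm_nonneg _)).trans h12)
    · exact integrable_const _
    · filter_upwards [haeS] with y hy
      intro z hz
      have hz' := hmem z hz
      have hQ := Qc_hasDerivAt t y z
      have hΦd := (hΦ (Qc t z y) (hpos z hz' y hy)).hasDerivAt
      exact (hΦd.comp z hQ).mul_const _
  exact hdiff.analyticAt (isOpen_ball.mem_nhds (mem_ball_self hρ))

/-- Transfer of complex analyticity back to real analyticity. -/
lemma transfer {n : ℕ} (μ : Measure (EuclideanSpace ℝ (Fin n)))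
    (S : Set (EuclideanSpace ℝ (Fin n))) (haeS : ∀ᵐ y ∂μ, y ∈ S)
    (θ : EuclideanSpace ℝ (Fin n) → ℝ) (t : EuclideanSpace ℝ (Fin n))
    (Φ : ℂ → ℂ) (ε₀ r : ℝ) (hr : 0 < r)
    (hH : AnalyticAt ℂ (fun z => ∫ y, Φ (Qc t z y) * ((θ y : ℝ) : ℂ) ∂μ) (ε₀ : ℂ))
    (hΦval : ∀ y ∈ S, ∀ ε : ℝ, |ε - ε₀| ≤ r →
      Φ (Qc t (ε : ℂ) y) = ((fundSol n (ε • t - y) : ℝ) : ℂ)) :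
    AnalyticAt ℝ (fun ε : ℝ => ∫ y, fundSol n (ε • t - y) * θ y ∂μ) ε₀ := by
  have h1 : AnalyticAt ℝ
      (fun ε : ℝ => (Complex.reCLM) ((fun z => ∫ y, Φ (Qc t z y) * ((θ y : ℝ) : ℂ) ∂μ)
        (Complex.ofRealCLM ε))) ε₀ :=
    (Complex.reCLM.analyticAt _).comp
      ((hH.restrictScalars).comp (Complex.ofRealCLM.analyticAt ε₀))
  apply h1.congr
  apply Filter.eventuallyEq_of_mem (Metric.ball_mem_nhds ε₀ hr)
  intro ε hε
  have hεr : |ε - ε₀| ≤ r := le_of_lt (by simpa [Real.dist_eq] using mem_ball.mp hε)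
  have hcong : (fun y => Φ (Qc t (ε : ℂ) y) * ((θ y : ℝ) : ℂ))
      =ᵐ[μ] (fun y => ((fundSol n (ε • t - y) * θ y : ℝ) : ℂ)) := by
    filter_upwards [haeS] with y hy
    rw [hΦval y hy ε hεr, Complex.ofReal_mul]
  have heq : (∫ y, Φ (Qc t (ε : ℂ) y) * ((θ y : ℝ) : ℂ) ∂μ)
      = ((∫ y, fundSol n (ε • t - y) * θ y ∂μ : ℝ) : ℂ) :=
    (integral_congr_ae hcong).trans
      (integral_ofReal (𝕜 := ℂ) (f := fun y => fundSol n (ε • t - y) * θ y))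
  simp only [Complex.ofRealCLM_apply, Complex.reCLM_apply]
  rw [heq, Complex.ofReal_re]

theorem stmt8 (n : ℕ) (hn : 2 ≤ n) (S : Set (EuclideanSpace ℝ (Fin n)))
    (hS : IsCompact S) (h0 : (0 : EuclideanSpace ℝ (Fin n)) ∉ S)
    (hfin : IsFiniteMeasure (bdryMeasure n S))
    (θ : EuclideanSpace ℝ (Fin n) → ℝ) (hθ : Continuous θ)
    (t : EuclideanSpace ℝ (Fin n)) :
    AnalyticOnNhd ℝ (fun ε : ℝ => ∫ y, fundSol n (ε • t - y) * θ y ∂(bdryMeasure n S))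
      {ε : ℝ | |ε| * ‖t‖ < Metric.infDist (0 : EuclideanSpace ℝ (Fin n)) S} := by
  classical
  by_cases hne : S.Nonempty
  swap
  · rw [Set.not_nonempty_iff_eq_empty] at hne
    intro ε hε
    exfalso
    simp only [hne, Metric.infDist_empty, Set.mem_setOf_eq] at hε
    nlinarith [abs_nonneg ε, norm_nonneg t]
  set μ := bdryMeasure n S with hμdef
  have hres : μ.restrict S = μ := by
    rw [hμdef, bdryMeasure, Measure.restrict_restrict hS.measurableSet, Set.inter_self]
  have haeS : ∀ᵐ y ∂μ, y ∈ S := by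
    rw [← hres]; exact ae_restrict_mem hS.measurableSet
  intro ε₀ hε₀
  simp only [Set.mem_setOf_eq] at hε₀
  set d := Metric.infDist (0 : EuclideanSpace ℝ (Fin n)) S with hddef
  set r := (d - |ε₀| * ‖t‖) / (3 * (‖t‖ + 1)) with hrdef
  have hr : 0 < r := by
    apply div_pos (by linarith) (by positivity)
  have hpos : ∀ z ∈ Metric.closedBall (ε₀ : ℂ) r, ∀ y ∈ S, 0 < (Qc t z y).re := by
    intro z hz y hy
    rw [Qc_re]
    exact pos_est t y S hy ε₀ hε₀ z hz
  -- value identity for the two cases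
  by_cases h2 : n = 2
  · set Φ : ℂ → ℂ := fun w => (-(1/(4*Real.pi)) : ℂ) * Complex.log w with hΦdef
    have hΦd : ∀ w : ℂ, 0 < w.re → DifferentiableAt ℂ Φ w := fun w hw =>
      (Complex.differentiableAt_log (Complex.mem_slitPlane_iff.mpr (Or.inl hw))).const_mul _
    have hH := key_analytic μ S hS hres θ hθ t Φ hΦd (ε₀ : ℂ) r hr hpos
    apply transfer μ S haeS θ t Φ ε₀ r hr hH
    intro y hy ε hεr
    have hcb : (ε : ℂ) ∈ Metric.closedBall (ε₀ : ℂ) r := by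
      rw [Metric.mem_closedBall, Complex.dist_eq, ← Complex.ofReal_sub, Complex.norm_real, Real.norm_eq_abs]
      exact hεr
    have hq : 0 < ‖ε • t - y‖^2 := by
      have h := hpos (ε : ℂ) hcb y hy
      rw [Qc_re, Complex.ofReal_re, Complex.ofReal_im] at h
      simpa using h
    rw [Qc_ofReal]
    show (-(1/(4*Real.pi)) : ℂ) * Complex.log ((‖ε • t - y‖^2 : ℝ) : ℂ)
      = ((fundSol n (ε • t - y) : ℝ) : ℂ)
    rw [← Complex.ofReal_log hq.le, fundSol, if_pos h2]
    rw [Real.log_pow]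
    push_cast
    have hπ : Real.pi ≠ 0 := Real.pi_ne_zero
    field_simp
    ring
  · set Φ : ℂ → ℂ := fun w : ℂ =>
      ((1/(((n:ℝ)-2) * sphereArea n) : ℝ) : ℂ) * w ^ (((((2:ℝ) - n)/2 : ℝ)) : ℂ) with hΦdef
    have hΦd : ∀ w : ℂ, 0 < w.re → DifferentiableAt ℂ Φ w := by
      intro w hw
      apply DifferentiableAt.const_mul
      exact ((hasDerivAt_id w).cpow_const
        (Complex.mem_slitPlane_iff.mpr (Or.inl hw))).differentiableAt
    have hH := key_analytic μ S hS hres θ hθ t Φ hΦd (ε₀ : ℂ) r hr hpos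
    apply transfer μ S haeS θ t Φ ε₀ r hr hH
    intro y hy ε hεr
    have hcb : (ε : ℂ) ∈ Metric.closedBall (ε₀ : ℂ) r := by
      rw [Metric.mem_closedBall, Complex.dist_eq, ← Complex.ofReal_sub, Complex.norm_real, Real.norm_eq_abs]
      exact hεr
    have hq : 0 < ‖ε • t - y‖^2 := by
      have h := hpos (ε : ℂ) hcb y hy
      rw [Qc_re, Complex.ofReal_re, Complex.ofReal_im] at h
      simpa using h
    rw [Qc_ofReal]
    show ((1/(((n:ℝ)-2) * sphereArea n) : ℝ) : ℂ) *
        ((‖ε • t - y‖^2 : ℝ) : ℂ) ^ (((((2:ℝ) - n)/2 : ℝ)) : ℂ)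
      = ((fundSol n (ε • t - y) : ℝ) : ℂ)
    rw [← Complex.ofReal_cpow (by positivity : (0:ℝ) ≤ ‖ε • t - y‖^2), fundSol, if_neg h2]
    rw [← Complex.ofReal_mul]
    congr 1
    congr 1
    have hx : (0:ℝ) ≤ ‖ε • t - y‖ := norm_nonneg _
    rw [← Real.rpow_natCast ‖ε • t - y‖ 2, ← Real.rpow_mul hx]
    congr 1
    push_cast
    ring
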